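/- arXiv:1912.10411 — 14 statements merged into one kernel-verified Lean document; each statement's English description precedes it below -/
import Mathlib

section
/- A function f : \mathbb{R}^+ \to \mathbb{R}^+ is ultrametric preserving if and only if f is amenable and increasing. -/
def IsMetric {X : Type*} (d : X → X → ℝ) : Prop :=
  (∀ x y, d x y = 0 ↔ x = y) ∧ (∀ x y, d x y = d y x) ∧
  (∀ x y z, d x y ≤ d x z + d z y)

def IsUltrametric {X : Type*} (d : X → X → ℝ) : Prop :=
  IsMetric d ∧ ∀ x y z, d x y ≤ max (d x z) (d z y)

def Amenable (f : ℝ → ℝ) : Prop := f 0 = 0 ∧ ∀ x > 0, f x > 0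

def MetricPreserving (f : ℝ → ℝ) : Prop :=
  ∀ (X : Type) (d : X → X → ℝ), IsMetric d → IsMetric (fun x y => f (d x y))

def UltrametricPreserving (f : ℝ → ℝ) : Prop :=
  ∀ (X : Type) (d : X → X → ℝ), IsUltrametric d → IsUltrametric (fun x y => f (d x y))

def TriangleTriplet (a b c : ℝ) : Prop := a ≤ b + c ∧ b ≤ a + c ∧ c ≤ a + b

def StrongTriangleTriplet (a b c : ℝ) : Prop :=
  a ≤ max b c ∧ b ≤ max a c ∧ c ≤ max a b

lemma dist_nonneg' {X : Type*} {d : X → X → ℝ} (h : IsMetric d) (x y : X) :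
    0 ≤ d x y := by
  obtain ⟨hid, hsym, htri⟩ := h
  have h1 : d x x ≤ d x y + d y x := htri x x y
  have h2 : d x x = 0 := (hid x x).mpr rfl
  have h3 : d y x = d x y := hsym y x
  linarith

-- two-point ultrametric
lemma two_point (t : ℝ) (ht : 0 < t) :
    IsUltrametric (fun x y : Bool => if x = y then 0 else t) := by
  refine ⟨⟨?_, ?_, ?_⟩, ?_⟩
  · intro x y; by_cases h : x = y <;> simp [h]; linarith
  · intro x y; by_cases h : x = y <;> simp [h, eq_comm]
  · intro x y z
    rcases x <;> rcases y <;> rcases z <;> simp <;> linarith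
  · intro x y z
    rcases x <;> rcases y <;> rcases z <;> simp <;> linarith

-- three-point ultrametric with distances a, b, b (0 < a ≤ b)
noncomputable def d3 (a b : ℝ) : Fin 3 → Fin 3 → ℝ := fun i j =>
  if i = j then 0 else if (i = 0 ∧ j = 1) ∨ (i = 1 ∧ j = 0) then a else b

lemma three_point (a b : ℝ) (ha : 0 < a) (hab : a ≤ b) :
    IsUltrametric (d3 a b) := by
  have hb : 0 < b := lt_of_lt_of_le ha hab
  refine ⟨⟨?_, ?_, ?_⟩, ?_⟩
  · intro x y
    fin_cases x <;> fin_cases y <;> simp [d3] <;> intro h <;> linarith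
  · intro x y
    fin_cases x <;> fin_cases y <;> simp [d3]
  · intro x y z
    fin_cases x <;> fin_cases y <;> fin_cases z <;> simp [d3] <;> linarith
  · intro x y z
    fin_cases x <;> fin_cases y <;> fin_cases z <;> simp [d3, le_max_iff] <;>
      first | (left; linarith) | (right; linarith) | linarith

theorem stmt2 (f : ℝ → ℝ) :
    UltrametricPreserving f ↔
      Amenable f ∧ (∀ a b : ℝ, 0 ≤ a → a ≤ b → f a ≤ f b) := by
  constructor
  · intro hf
    -- f 0 = 0 from one-point space
    have h0 : f 0 = 0 := by
      have hu : IsUltrametric (fun _ _ : Unit => (0 : ℝ)) := by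
        refine ⟨⟨?_, ?_, ?_⟩, ?_⟩ <;> simp
      have := hf Unit _ hu
      exact (this.1.1 () ()).mpr rfl
    have hpos : ∀ x > 0, f x > 0 := by
      intro t ht
      have hu := hf Bool _ (two_point t ht)
      have hne : f (if (true : Bool) = false then 0 else t) ≠ 0 := by
        intro h
        exact Bool.noConfusion ((hu.1.1 true false).mp h)
      have hnn := dist_nonneg' hu.1 true false
      simp at hne hnn
      exact lt_of_le_of_ne hnn (Ne.symm hne)
    refine ⟨⟨h0, hpos⟩, ?_⟩
    intro a b ha hab
    rcases eq_or_lt_of_le ha with ha' | ha'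
    · rcases eq_or_lt_of_le (ha' ▸ hab) with hb | hb
      · rw [← ha', ← hb]
      · rw [← ha', h0]; exact le_of_lt (hpos b hb)
    · have hu := hf (Fin 3) _ (three_point a b ha' hab)
      have := hu.2 0 1 2
      have h01 : d3 a b 0 1 = a := by simp [d3]
      have h02 : d3 a b 0 2 = b := by simp [d3]
      have h21 : d3 a b 2 1 = b := by simp [d3]
      simp only [h01, h02, h21, max_self] at this
      exact this
  · rintro ⟨⟨h0, hpos⟩, hmono⟩
    intro X d hd
    obtain ⟨⟨hid, hsym, htri⟩, hult⟩ := hd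
    have hnn : ∀ x y, 0 ≤ d x y := dist_nonneg' ⟨hid, hsym, htri⟩
    have hfnn : ∀ t, 0 ≤ t → 0 ≤ f t := by
      intro t ht
      rcases eq_or_lt_of_le ht with h | h
      · rw [← h, h0]
      · exact le_of_lt (hpos t h)
    have key : ∀ x y z : X, f (d x y) ≤ max (f (d x z)) (f (d z y)) := by
      intro x y z
      have h1 := hult x y z
      rcases le_total (d x z) (d z y) with h | h
      · have := hmono (d x y) (d z y) (hnn x y) (by rw [max_eq_right h] at h1; exact h1)
        exact le_max_of_le_right this
      · have := hmono (d x y) (d x z) (hnn x y) (by rw [max_eq_left h] at h1; exact h1)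
        exact le_max_of_le_left this
    refine ⟨⟨?_, ?_, ?_⟩, key⟩
    · intro x y
      constructor
      · intro h
        by_contra hne
        have : d x y > 0 := lt_of_le_of_ne (hnn x y) (fun h' => hne ((hid x y).mp h'.symm))
        exact absurd h (ne_of_gt (hpos _ this))
      · intro h; show f (d x y) = 0; rw [(hid x y).mpr h, h0]
    · intro x y; show f (d x y) = f (d y x); rw [hsym x y]
    · intro x y z
      have := key x y z
      have h1 := hfnn _ (hnn x z)
      have h2 := hfnn _ (hnn z y)
      rcases max_cases (f (d x z)) (f (d z y)) with ⟨he, _⟩ | ⟨he, _⟩ <;> rw [he] at this <;> linarith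
end

section
/- For \Psi : \mathbb{R}^+ \to \mathbb{R}^+, the following are equivalent: (i) \Psi(0) = 0 and 0 < \Psi(a) \le 2\Psi(b) whenever 0 < a < b; (ii) for every ultrametric space (X, d), the composition \Psi \circ d is a metric on X. -/
lemma tri_of_strong (Ψ : ℝ → ℝ) (h0 : Ψ 0 = 0)
    (h : ∀ a b : ℝ, 0 < a → a < b → 0 < Ψ a ∧ Ψ a ≤ 2 * Ψ b)
    {a b c : ℝ} (ha : 0 ≤ a) (hb : 0 ≤ b) (hc : 0 ≤ c)
    (h1 : c ≤ max a b) (h2 : a ≤ max b c) (h3 : b ≤ max a c) :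
    Ψ c ≤ Ψ a + Ψ b := by
  have pos : ∀ x : ℝ, 0 < x → 0 < Ψ x := fun x hx => (h x (x + 1) hx (by linarith)).1
  have nonneg : ∀ x : ℝ, 0 ≤ x → 0 ≤ Ψ x := by
    intro x hx
    rcases hx.eq_or_lt with h' | h'
    · simp [← h', h0]
    · exact (pos x h').le
  rcases hc.eq_or_lt with hc0 | hc0
  · rw [← hc0, h0]; exact add_nonneg (nonneg a ha) (nonneg b hb)
  rcases lt_trichotomy c a with hca | hca | hca
  · rcases lt_trichotomy c b with hcb | hcb | hcb
    · have h4 := (h c a hc0 hca).2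
      have h5 := (h c b hc0 hcb).2
      linarith
    · subst hcb; linarith [nonneg a ha]
    · exfalso
      have hm : max b c ≤ c := max_le hcb.le le_rfl
      linarith [le_trans h2 hm]
  · subst hca; linarith [nonneg b hb]
  · have hcb : c ≤ b := by
      rcases max_cases a b with ⟨he, _⟩ | ⟨he, _⟩
      · exfalso; rw [he] at h1; linarith
      · rwa [he] at h1
    have hbc : b ≤ c := by
      have : max a c = c := max_eq_right hca.le
      rwa [this] at h3
    have : c = b := le_antisymm hcb hbc
    subst this; linarith [nonneg a ha]

theorem stmt3 (Ψ : ℝ → ℝ) :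
    (Ψ 0 = 0 ∧ ∀ a b : ℝ, 0 < a → a < b → 0 < Ψ a ∧ Ψ a ≤ 2 * Ψ b) ↔
      (∀ (X : Type) (d : X → X → ℝ), IsUltrametric d →
        IsMetric (fun x y => Ψ (d x y))) := by
  constructor
  · rintro ⟨h0, h⟩ X d ⟨⟨heq, hsymm, htri⟩, hult⟩
    have pos : ∀ x : ℝ, 0 < x → 0 < Ψ x := fun x hx => (h x (x + 1) hx (by linarith)).1
    have dnn : ∀ x y, 0 ≤ d x y := by
      intro x y
      have := htri x x y
      rw [(heq x x).mpr rfl, hsymm y x] at this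
      linarith
    refine ⟨?_, fun x y => by show Ψ (d x y) = Ψ (d y x); rw [hsymm], ?_⟩
    · intro x y
      show Ψ (d x y) = 0 ↔ x = y
      constructor
      · intro hz
        by_contra hne
        have hd : d x y ≠ 0 := fun h' => hne ((heq x y).mp h')
        have : 0 < d x y := lt_of_le_of_ne (dnn x y) (Ne.symm hd)
        exact absurd hz (ne_of_gt (pos _ this))
      · intro hxy; show Ψ (d x y) = 0; rw [(heq x y).mpr hxy, h0]
    · intro x y z
      show Ψ (d x y) ≤ Ψ (d x z) + Ψ (d z y)
      refine tri_of_strong Ψ h0 h (dnn x z) (dnn z y) (dnn x y) (hult x y z) ?_ ?_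
      · have := hult x z y
        rwa [hsymm y z, max_comm] at this
      · have := hult z y x
        rwa [hsymm z x] at this
  · intro H
    have hΨ0 : Ψ 0 = 0 := by
      have hu : IsUltrametric (fun (_ _ : Unit) => (0 : ℝ)) := by
        refine ⟨⟨fun x y => by simp, fun x y => rfl, fun x y z => by norm_num⟩, fun x y z => by simp⟩
      have := (H Unit _ hu).1 () ()
      simpa using this
    refine ⟨hΨ0, ?_⟩
    intro a b ha hab
    -- positivity of Ψ a via two-point space
    have hpos : 0 < Ψ a := by
      set d2 : Bool → Bool → ℝ := fun i j => if i = j then 0 else a with hd2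
      have hu : IsUltrametric d2 := by
        refine ⟨⟨?_, ?_, ?_⟩, ?_⟩
        · intro x y; by_cases hxy : x = y <;> simp [d2, hxy]
          exact ne_of_gt ha
        · intro x y; by_cases hxy : x = y <;> simp [d2, hxy, eq_comm]
        · intro x y z
          by_cases hxy : x = y <;> by_cases hxz : x = z <;> by_cases hzy : z = y <;>
            simp_all [d2] <;> linarith
        · intro x y z
          by_cases hxy : x = y <;> by_cases hxz : x = z <;> by_cases hzy : z = y <;>
            simp_all [d2, le_max_iff] <;> linarith
      obtain ⟨meq, _, mtri⟩ := H Bool d2 hu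
      have hne : Ψ (d2 true false) ≠ 0 := fun h' => by simpa using (meq true false).mp h'
      have h1 : Ψ (d2 true true) ≤ Ψ (d2 true false) + Ψ (d2 false true) := mtri true true false
      have e1 : d2 true true = 0 := by simp [d2]
      have e2 : d2 true false = a := by simp [d2]
      have e3 : d2 false true = a := by simp [d2]
      rw [e1, e2, e3, hΨ0] at h1
      rw [e2] at hne
      rcases lt_or_eq_of_le (by linarith : (0:ℝ) ≤ Ψ a) with h' | h'
      · exact h'
      · exact absurd h'.symm hne
    refine ⟨hpos, ?_⟩
    -- three-point space
    set d3 : Fin 3 → Fin 3 → ℝ := fun i j => if i = j then 0 else if i ≠ 2 ∧ j ≠ 2 then a else b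
      with hd3
    have hu : IsUltrametric d3 := by
      refine ⟨⟨?_, ?_, ?_⟩, ?_⟩
      · intro x y; fin_cases x <;> fin_cases y <;> simp [d3] <;> linarith
      · intro x y; fin_cases x <;> fin_cases y <;> simp [d3]
      · intro x y z; fin_cases x <;> fin_cases y <;> fin_cases z <;> simp [d3] <;> linarith
      · intro x y z; fin_cases x <;> fin_cases y <;> fin_cases z <;>
          simp [d3, le_max_iff] <;> linarith
    obtain ⟨_, _, mtri⟩ := H (Fin 3) d3 hu
    have h1 : Ψ (d3 0 1) ≤ Ψ (d3 0 2) + Ψ (d3 2 1) := mtri 0 1 2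
    have e1 : d3 0 1 = a := by simp [d3]
    have e2 : d3 0 2 = b := by simp [d3]
    have e3 : d3 2 1 = b := by simp [d3]
    rw [e1, e2, e3] at h1
    linarith
end

section
/- If f : \mathbb{R}^+ \to \mathbb{R}^+ is ultrametric preserving and subadditive, then f is metric preserving. -/
lemma metric_nonneg {X : Type*} {d : X → X → ℝ} (h : IsMetric d) :
    ∀ x y, 0 ≤ d x y := by
  intro x y
  have h1 := h.2.2 x x y
  have h2 : d x x = 0 := (h.1 x x).mpr rfl
  have h3 : d y x = d x y := h.2.1 y x
  linarith

lemma up_f0 (f : ℝ → ℝ) (h1 : UltrametricPreserving f) : f 0 = 0 := by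
  have hu : IsUltrametric (fun (_ _ : Unit) => (0:ℝ)) := by
    refine ⟨⟨?_, ?_, ?_⟩, ?_⟩ <;> intros <;> simp
  have := (h1 Unit _ hu).1.1 () ()
  simpa using this.mpr rfl

lemma up_fpos (f : ℝ → ℝ) (h1 : UltrametricPreserving f) :
    ∀ b : ℝ, 0 < b → 0 < f b := by
  intro b hb
  set d : Fin 2 → Fin 2 → ℝ := fun i j => if i = j then 0 else b with hd
  have hu : IsUltrametric d := by
    refine ⟨⟨?_, ?_, ?_⟩, ?_⟩
    · intro x y
      fin_cases x <;> fin_cases y <;> simp [hd] <;> linarith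
    · intro x y
      fin_cases x <;> fin_cases y <;> simp [hd, Fin.ext_iff]
    · intro x y z
      fin_cases x <;> fin_cases y <;> fin_cases z <;> simp [hd] <;> linarith
    · intro x y z
      fin_cases x <;> fin_cases y <;> fin_cases z <;>
        simp [hd, le_max_iff] <;> linarith
  have hm := (h1 (Fin 2) d hu).1
  have hne : f (d 0 1) ≠ 0 := by
    intro h
    have := (hm.1 0 1).mp h
    simp at this
  have hnn : 0 ≤ f (d 0 1) := metric_nonneg hm 0 1
  have : d (0 : Fin 2) 1 = b := by simp [hd]
  rw [this] at hne hnn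
  exact lt_of_le_of_ne hnn (Ne.symm hne)

lemma up_mono (f : ℝ → ℝ) (h1 : UltrametricPreserving f) :
    ∀ a b : ℝ, 0 ≤ a → a ≤ b → f a ≤ f b := by
  intro a b ha hab
  rcases eq_or_lt_of_le ha with rfl | hapos
  · rw [up_f0 f h1]
    rcases eq_or_lt_of_le hab with rfl | hb
    · rw [up_f0 f h1]
    · exact (up_fpos f h1 b hb).le
  · set d : Fin 3 → Fin 3 → ℝ := fun i j =>
      if i = j then 0 else if (i = 0 ∧ j = 1) ∨ (i = 1 ∧ j = 0) then a else b
      with hd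
    have hbpos : 0 < b := lt_of_lt_of_le hapos hab
    have hu : IsUltrametric d := by
      refine ⟨⟨?_, ?_, ?_⟩, ?_⟩
      · intro x y
        fin_cases x <;> fin_cases y <;> simp [hd] <;> linarith
      · intro x y
        fin_cases x <;> fin_cases y <;> simp [hd]
      · intro x y z
        fin_cases x <;> fin_cases y <;> fin_cases z <;> simp [hd] <;> linarith
      · intro x y z
        fin_cases x <;> fin_cases y <;> fin_cases z <;>
          simp [hd, le_max_iff] <;> linarith
    have e01 : d 0 1 = a := by simp [hd]
    have e02 : d 0 2 = b := by simp [hd]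
    have e21 : d 2 1 = b := by simp [hd]
    have := (h1 (Fin 3) d hu).2 0 1 2
    simp only [e01, e02, e21, max_self] at this
    exact this

theorem stmt4 (f : ℝ → ℝ)
    (h1 : UltrametricPreserving f)
    (h2 : ∀ a b : ℝ, 0 ≤ a → 0 ≤ b → f (a + b) ≤ f a + f b) :
    MetricPreserving f := by
  intro X d hd
  have hnn : ∀ x y, 0 ≤ d x y := metric_nonneg hd
  refine ⟨?_, ?_, ?_⟩
  · intro x y
    constructor
    · intro h
      by_contra hxy
      have hpos : 0 < d x y := by
        rcases eq_or_lt_of_le (hnn x y) with h0 | h0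
        · exact absurd ((hd.1 x y).mp h0.symm) hxy
        · exact h0
      exact absurd h (ne_of_gt (up_fpos f h1 _ hpos))
    · intro h
      subst h
      show f (d x x) = 0
      rw [(hd.1 x x).mpr rfl]
      exact up_f0 f h1
  · intro x y
    simp [hd.2.1 x y]
  · intro x y z
    calc f (d x y) ≤ f (d x z + d z y) :=
          up_mono f h1 _ _ (hnn x y) (hd.2.2 x y z)
      _ ≤ f (d x z) + f (d z y) := h2 _ _ (hnn x z) (hnn z y)
end

section
/- If f : \mathbb{R}^+ \to \mathbb{R}^+ is metric preserving and increasing, then f is ultrametric preserving. -/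
theorem stmt5 (f : ℝ → ℝ)
    (h1 : MetricPreserving f)
    (h2 : ∀ a b : ℝ, 0 ≤ a → a ≤ b → f a ≤ f b) :
    UltrametricPreserving f := by
  intro X d hd
  obtain ⟨hm, hs⟩ := hd
  refine ⟨h1 X d hm, fun x y z => ?_⟩
  have nonneg : ∀ a b : X, 0 ≤ d a b := by
    intro a b
    have h0 : d a a = 0 := (hm.1 a a).mpr rfl
    have := hm.2.2 a a b
    rw [h0, hm.2.1 b a] at this
    linarith
  have hxy := hs x y z
  rcases le_total (d x z) (d z y) with h | h
  · have : d x y ≤ d z y := le_trans hxy (by simp [max_eq_right h])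
    exact le_max_of_le_right (h2 _ _ (nonneg x y) this)
  · have : d x y ≤ d x z := le_trans hxy (by simp [max_eq_left h])
    exact le_max_of_le_left (h2 _ _ (nonneg x y) this)
end

section
/- Let f : \mathbb{R}^+ \to \mathbb{R}^+ be amenable. Then f is metric preserving if and only if (f(a), f(b), f(c)) is a triangle triplet whenever (a,b,c) is a triangle triplet. -/
lemma amenable_nonneg {f : ℝ → ℝ} (hf : Amenable f) {x : ℝ} (hx : 0 ≤ x) : 0 ≤ f x := by
  rcases eq_or_lt_of_le hx with h | h
  · rw [← h, hf.1]
  · exact le_of_lt (hf.2 x h)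

theorem stmt6 (f : ℝ → ℝ) (hf : Amenable f) :
    MetricPreserving f ↔
      (∀ a b c : ℝ, 0 ≤ a → 0 ≤ b → 0 ≤ c → TriangleTriplet a b c →
        TriangleTriplet (f a) (f b) (f c)) := by
  constructor
  · intro hmp a b c ha hb hc ht
    obtain ⟨h1, h2, h3⟩ := ht
    -- degenerate cases
    rcases eq_or_lt_of_le ha with ha0 | ha0
    · have hbc : b = c := le_antisymm (by linarith) (by linarith)
      subst hbc
      rw [← ha0, hf.1]
      have := amenable_nonneg hf hb
      exact ⟨by linarith, by linarith, by linarith⟩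
    rcases eq_or_lt_of_le hb with hb0 | hb0
    · have hac : a = c := le_antisymm (by linarith) (by linarith)
      subst hac
      rw [← hb0, hf.1]
      have := amenable_nonneg hf ha
      exact ⟨by linarith, by linarith, by linarith⟩
    rcases eq_or_lt_of_le hc with hc0 | hc0
    · have hab : a = b := le_antisymm (by linarith) (by linarith)
      subst hab
      rw [← hc0, hf.1]
      have := amenable_nonneg hf ha
      exact ⟨by linarith, by linarith, by linarith⟩
    -- main case: define metric on Fin 3
    set d : Fin 3 → Fin 3 → ℝ := fun i j =>
      if i = j then 0
      else if (i = 0 ∧ j = 1) ∨ (i = 1 ∧ j = 0) then c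
      else if (i = 1 ∧ j = 2) ∨ (i = 2 ∧ j = 1) then a
      else b with hd
    have hmet : IsMetric d := by
      refine ⟨?_, ?_, ?_⟩
      · intro x y
        fin_cases x <;> fin_cases y <;> simp [hd] <;> linarith
      · intro x y
        fin_cases x <;> fin_cases y <;> simp [hd]
      · intro x y z
        fin_cases x <;> fin_cases y <;> fin_cases z <;> simp [hd] <;> linarith
    have := hmp (Fin 3) d hmet
    obtain ⟨_, _, htri⟩ := this
    have hA : d 1 2 = a := by simp [hd]
    have hB : d 0 2 = b := by simp [hd]
    have hC : d 0 1 = c := by simp [hd]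
    refine ⟨?_, ?_, ?_⟩
    · have h' := htri 1 2 0
      have h10 : d 1 0 = c := by simp [hd]
      simp only [hA, hB, hC, h10] at h'
      linarith
    · have h' := htri 0 2 1
      have h12 : d 1 2 = a := by simp [hd]
      simp only [hA, hB, hC, h12] at h'
      linarith
    · have h' := htri 0 1 2
      have h21 : d 2 1 = a := by simp [hd]
      simp only [hA, hB, hC, h21] at h'
      linarith
  · intro h X d hd
    obtain ⟨hid, hsym, htri⟩ := hd
    have hnn : ∀ x y, 0 ≤ d x y := by
      intro x y
      have h1 := htri x x y
      have h2 : d x x = 0 := (hid x x).mpr rfl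
      have h3 := hsym x y
      linarith
    refine ⟨?_, ?_, ?_⟩
    · intro x y
      constructor
      · intro hfz
        by_contra hne
        have hpos : 0 < d x y := lt_of_le_of_ne (hnn x y) (fun he => hne ((hid x y).mp he.symm))
        exact absurd hfz (ne_of_gt (hf.2 _ hpos))
      · intro he
        subst he
        show f (d x x) = 0
        rw [(hid x x).mpr rfl, hf.1]
    · intro x y; simp [hsym x y]
    · intro x y z
      have ht : TriangleTriplet (d x y) (d x z) (d z y) := by
        refine ⟨htri x y z, ?_, ?_⟩
        · have h1 := htri x z y
          have h2 := hsym y z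
          linarith
        · have h1 := htri z y x
          have h2 := hsym z x
          have h3 := hsym x y
          linarith
      exact (h _ _ _ (hnn x y) (hnn x z) (hnn z y) ht).1
end

section
/- Let f : \mathbb{R}^+ \to \mathbb{R}^+ be amenable. Then f \circ d is an ultrametric for every ultrametric d if and only if (f(a), f(b), f(c)) is a strong triangle triplet whenever (a,b,c) is a strong triangle triplet. -/
theorem stmt7 (f : ℝ → ℝ) (hf : Amenable f) :
    UltrametricPreserving f ↔
      (∀ a b c : ℝ, 0 ≤ a → 0 ≤ b → 0 ≤ c → StrongTriangleTriplet a b c →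
        StrongTriangleTriplet (f a) (f b) (f c)) := by
  obtain ⟨hf0, hfpos⟩ := hf
  have fnn : ∀ x : ℝ, 0 ≤ x → 0 ≤ f x := by
    intro x hx
    rcases hx.eq_or_lt with h | h
    · simp [← h, hf0]
    · exact (hfpos x h).le
  constructor
  · intro hUP
    have mono : ∀ a b : ℝ, 0 ≤ a → a ≤ b → f a ≤ f b := by
      intro a b ha hab
      rcases ha.eq_or_lt with h | h
      · rw [← h, hf0]; exact fnn b (ha.trans hab)
      · have hb : 0 < b := h.trans_le hab
        set d : Fin 3 → Fin 3 → ℝ := fun i j =>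
          if i = j then 0 else if i ≠ 0 ∧ j ≠ 0 then a else b with hd
        have hub : IsUltrametric d := by
          refine ⟨⟨?_, ?_, ?_⟩, ?_⟩
          · intro x y
            fin_cases x <;> fin_cases y <;> simp [hd] <;> linarith
          · intro x y
            fin_cases x <;> fin_cases y <;> simp [hd]
          · intro x y z
            fin_cases x <;> fin_cases y <;> fin_cases z <;> simp [hd] <;> linarith
          · intro x y z
            fin_cases x <;> fin_cases y <;> fin_cases z <;>
              simp [hd, le_max_iff] <;> linarith
        have := (hUP (Fin 3) d hub).2 1 2 0
        simpa [hd] using this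
    have key : ∀ a b c : ℝ, 0 ≤ a → a ≤ max b c → f a ≤ max (f b) (f c) := by
      intro a b c ha h
      rcases le_total b c with hbc | hbc
      · rw [max_eq_right hbc] at h
        exact le_max_of_le_right (mono a c ha h)
      · rw [max_eq_left hbc] at h
        exact le_max_of_le_left (mono a b ha h)
    intro a b c ha hb hc ⟨h1, h2, h3⟩
    exact ⟨key a b c ha h1, key b a c hb h2, key c a b hc h3⟩
  · intro hSTT X d ⟨⟨hd0, hdsym, hdtri⟩, hdu⟩
    have dnn : ∀ x y, 0 ≤ d x y := by
      intro x y
      have h1 := hdtri x x y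
      have h2 := (hd0 x x).2 rfl
      have h3 := hdsym x y
      linarith
    have hstt : ∀ x y z, StrongTriangleTriplet (d x y) (d x z) (d z y) := by
      intro x y z
      refine ⟨hdu x y z, ?_, ?_⟩
      · have := hdu x z y
        rwa [hdsym y z] at this
      · have := hdu z y x
        rwa [hdsym z x, max_comm] at this
    have hfstt : ∀ x y z, StrongTriangleTriplet (f (d x y)) (f (d x z)) (f (d z y)) :=
      fun x y z => hSTT _ _ _ (dnn x y) (dnn x z) (dnn z y) (hstt x y z)
    refine ⟨⟨?_, ?_, ?_⟩, fun x y z => (hfstt x y z).1⟩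
    · intro x y
      constructor
      · intro h
        by_contra hne
        have hpos : 0 < d x y := (dnn x y).lt_of_ne' (fun h' => hne ((hd0 x y).1 h'))
        exact (hfpos _ hpos).ne' h
      · intro h
        show f (d x y) = 0
        rw [(hd0 x y).2 h, hf0]
    · intro x y; show f (d x y) = f (d y x); rw [hdsym]
    · intro x y z
      have h1 := (hfstt x y z).1
      have h2 := fnn _ (dnn x z)
      have h3 := fnn _ (dnn z y)
      refine h1.trans (max_le ?_ ?_) <;> linarith
end

section
/- Let f : \mathbb{R}^+ \to \mathbb{R}^+ be metric preserving, x_0 \in \mathbb{R}^+, and f(x_0) = a. Then f(x) \ge a/2 for all x > x_0. -/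
theorem stmt8 (f : ℝ → ℝ) (hf : MetricPreserving f)
    (x₀ : ℝ) (hx₀ : 0 ≤ x₀) (a : ℝ) (ha : f x₀ = a) :
    ∀ x : ℝ, x₀ < x → a / 2 ≤ f x := by
  intro x hx
  rcases hx₀.eq_or_lt with h0 | h0
  · -- x₀ = 0, so a = f 0 = 0; need 0 ≤ f x from two-point metric
    subst h0
    have hxpos : 0 < x := hx
    set d : Bool → Bool → ℝ := fun b c => if b = c then 0 else x with hd
    have hdm : IsMetric d := by
      refine ⟨?_, ?_, ?_⟩
      · intro b c
        by_cases h : b = c <;> simp [d, h, ne_of_gt hxpos]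
      · intro b c
        by_cases h : b = c <;> simp [d, h, Ne.symm, eq_comm]
      · intro b c e
        cases b <;> cases c <;> cases e <;> simp [d] <;> linarith
    have hm := hf Bool d hdm
    have h1 : f (d true true) ≤ f (d true false) + f (d false true) := hm.2.2 true true false
    have h0' : f (d true true) = 0 := (hm.1 true true).mpr rfl
    have hd1 : d true false = x := by simp [d]
    have hd2 : d false true = x := by simp [d]
    rw [h0', hd1, hd2] at h1
    rw [← ha]
    have hf0 : f 0 = 0 := by simpa [d] using h0'
    rw [hf0]
    linarith
  · -- x₀ > 0: three-point metric
    set d : Fin 3 → Fin 3 → ℝ := fun i j =>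
      if i = j then 0 else if (i = 0 ∧ j = 1) ∨ (i = 1 ∧ j = 0) then x₀ else x with hd
    have hxpos : 0 < x := lt_trans h0 hx
    have hdm : IsMetric d := by
      refine ⟨?_, ?_, ?_⟩
      · intro i j
        fin_cases i <;> fin_cases j <;>
          simp [d, ne_of_gt h0, ne_of_gt hxpos]
      · intro i j
        fin_cases i <;> fin_cases j <;> simp [d]
      · intro i j k
        fin_cases i <;> fin_cases j <;> fin_cases k <;> simp [d] <;> linarith
    have hm := hf (Fin 3) d hdm
    have h1 : f (d 0 1) ≤ f (d 0 2) + f (d 2 1) := hm.2.2 0 1 2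
    have e1 : d 0 1 = x₀ := by simp [d]
    have e2 : d 0 2 = x := by simp [d]
    have e3 : d 2 1 = x := by simp [d]
    rw [e1, e2, e3, ha] at h1
    linarith
end

section
/- Let p be a prime. A function f : \mathbb{R}^+ \to \mathbb{R}^+ is p-adic metric preserving (i.e., f \circ d_p is a metric on \mathbb{Q}_p) if and only if f(0) = 0 and 0 < f(p^m) \le 2 f(p^n) holds whenever m, n \in \mathbb{Z} and m < n. -/
private lemma padic_dist_pow (p : ℕ) [Fact p.Prime] (x y : ℚ_[p]) (h : x ≠ y) :
    ∃ k : ℤ, dist x y = (p : ℝ) ^ k := by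
  have hxy : x - y ≠ 0 := sub_ne_zero.mpr h
  exact ⟨-(x - y).valuation, by rw [dist_eq_norm, Padic.norm_eq_zpow_neg_valuation hxy]⟩

theorem stmt11 (p : ℕ) [Fact p.Prime] (f : ℝ → ℝ) :
    IsMetric (fun x y : ℚ_[p] => f (dist x y)) ↔
      (f 0 = 0 ∧ ∀ m n : ℤ, m < n →
        0 < f ((p : ℝ) ^ m) ∧ f ((p : ℝ) ^ m) ≤ 2 * f ((p : ℝ) ^ n)) := by
  have hp1 : (1 : ℝ) < p := by exact_mod_cast (Fact.out : p.Prime).one_lt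
  have hp0 : (0 : ℝ) < p := lt_trans one_pos hp1
  have hpQ : (p : ℚ_[p]) ≠ 0 := by
    exact_mod_cast (Nat.cast_ne_zero (R := ℚ_[p])).mpr (Fact.out : p.Prime).ne_zero
  have hnorm : ∀ k : ℤ, ‖(p : ℚ_[p]) ^ (-k)‖ = (p : ℝ) ^ k := by
    intro k
    rw [Padic.norm_p_zpow, neg_neg]
  constructor
  · rintro ⟨h0, hsymm, htri⟩
    have hf0 : f 0 = 0 := by
      have := (h0 0 0).mpr rfl
      simpa using this
    refine ⟨hf0, fun m n hmn => ?_⟩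
    set x : ℚ_[p] := 0 with hx
    set y : ℚ_[p] := (p : ℚ_[p]) ^ (-m) with hy
    set z : ℚ_[p] := (p : ℚ_[p]) ^ (-n) with hz
    have hny : ‖y‖ = (p : ℝ) ^ m := hnorm m
    have hnz : ‖z‖ = (p : ℝ) ^ n := hnorm n
    have hdxy : dist x y = (p : ℝ) ^ m := by
      rw [dist_eq_norm, hx, zero_sub, norm_neg, hny]
    have hdxz : dist x z = (p : ℝ) ^ n := by
      rw [dist_eq_norm, hx, zero_sub, norm_neg, hnz]
    have hlt : ‖y‖ < ‖z‖ := by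
      rw [hny, hnz]
      exact zpow_lt_zpow_right₀ hp1 hmn
    have hdzy : dist z y = (p : ℝ) ^ n := by
      rw [dist_eq_norm, sub_eq_add_neg,
        Padic.add_eq_max_of_ne (by rw [norm_neg]; exact hlt.ne'), norm_neg, hnz, hny]
      exact max_eq_left (zpow_le_zpow_right₀ hp1.le hmn.le)
    have hxney : x ≠ y := by
      intro hcon
      have : ‖y‖ = 0 := by rw [← hcon, hx, norm_zero]
      rw [hny] at this
      exact (zpow_pos hp0 m).ne' this
    -- nonnegativity + positivity
    have hfxy0 : f (dist x y) ≠ 0 := by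
      intro hcon
      exact hxney ((h0 x y).mp hcon)
    have hnn : 0 ≤ f (dist x y) := by
      have h1 := htri x x y
      have h2 := (h0 x x).mpr rfl
      have h3 := hsymm x y
      simp only at h1 h2 h3
      rw [h2] at h1
      linarith [h1, h3]
    have hpos : 0 < f ((p : ℝ) ^ m) := by
      rw [← hdxy]
      exact lt_of_le_of_ne hnn (Ne.symm hfxy0)
    refine ⟨hpos, ?_⟩
    have h4 := htri x y z
    simp only at h4
    rw [hdxy, hdxz, hdzy] at h4
    linarith
  · rintro ⟨hf0, hf⟩
    have hposk : ∀ k : ℤ, 0 < f ((p : ℝ) ^ k) := fun k => (hf k (k + 1) (by omega)).1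
    have hle : ∀ m n : ℤ, m ≤ n → f ((p : ℝ) ^ m) ≤ 2 * f ((p : ℝ) ^ n) := by
      intro m n hmn
      rcases lt_or_eq_of_le hmn with h | h
      · exact (hf m n h).2
      · rw [h]; linarith [hposk n]
    have hnonneg : ∀ x y : ℚ_[p], 0 ≤ f (dist x y) := by
      intro x y
      by_cases h : x = y
      · rw [h, dist_self, hf0]
      · obtain ⟨k, hk⟩ := padic_dist_pow p x y h
        rw [hk]; exact (hposk k).le
    refine ⟨?_, ?_, ?_⟩
    · intro x y
      constructor
      · intro h
        change f (dist x y) = 0 at h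
        by_contra hxy
        obtain ⟨k, hk⟩ := padic_dist_pow p x y hxy
        rw [hk] at h
        exact (hposk k).ne' h
      · rintro rfl
        show f (dist x x) = 0
        rw [dist_self, hf0]
    · intro x y
      show f (dist x y) = f (dist y x)
      rw [dist_comm]
    · intro x y z
      show f (dist x y) ≤ f (dist x z) + f (dist z y)
      by_cases hxy : x = y
      · rw [hxy, dist_self, hf0]
        exact add_nonneg (hnonneg _ _) (hnonneg _ _)
      by_cases hxz : x = z
      · rw [hxz, dist_self, hf0, zero_add]
      by_cases hzy : z = y
      · rw [hzy, dist_self, hf0, add_zero]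
      obtain ⟨a, ha⟩ := padic_dist_pow p x y hxy
      obtain ⟨b, hb⟩ := padic_dist_pow p x z hxz
      obtain ⟨c, hc⟩ := padic_dist_pow p z y hzy
      rw [ha, hb, hc]
      -- ultrametric inequalities on exponents
      have key : ∀ u v w : ℚ_[p], dist u v ≤ max (dist u w) (dist w v) := by
        intro u v w
        have h1 : u - v = (u - w) + (w - v) := by ring
        rw [dist_eq_norm, dist_eq_norm, dist_eq_norm, h1]
        exact Padic.nonarchimedean _ _
      have expcv : ∀ s t : ℤ, (p : ℝ) ^ s ≤ (p : ℝ) ^ t → s ≤ t := by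
        intro s t h
        exact (zpow_le_zpow_iff_right₀ hp1).mp h
      have h1 : a ≤ max b c := by
        have := key x y z
        rw [ha, hb, hc] at this
        rcases le_max_iff.mp this with h | h
        · exact le_max_of_le_left (expcv _ _ h)
        · exact le_max_of_le_right (expcv _ _ h)
      have h2 : b ≤ max a c := by
        have := key x z y
        rw [hb, ha, dist_comm y z, hc] at this
        rcases le_max_iff.mp this with h | h
        · exact le_max_of_le_left (expcv _ _ h)
        · exact le_max_of_le_right (expcv _ _ h)
      have h3 : c ≤ max a b := by
        have := key z y x
        rw [hc, dist_comm z x, hb, ha] at this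
        rcases le_max_iff.mp this with h | h
        · exact le_max_of_le_right (expcv _ _ h)
        · exact le_max_of_le_left (expcv _ _ h)
      -- case analysis
      rcases le_total b c with hbc | hcb
      · have hac : a ≤ c := le_trans h1 (max_le hbc le_rfl)
        rcases le_max_iff.mp h3 with hca | hcb'
        · have : a = c := le_antisymm hac hca
          rw [this]
          linarith [hposk b]
        · have : b = c := le_antisymm hbc hcb'
          rw [this]
          linarith [hle a c hac]
      · have hab : a ≤ b := le_trans h1 (max_le le_rfl hcb)
        rcases le_max_iff.mp h2 with hba | hbc'
        · have : a = b := le_antisymm hab hba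
          rw [this]
          linarith [hposk c]
        · have : b = c := le_antisymm hbc' hcb
          rw [← this]
          linarith [hle a b hab]
end

section
/- Let p be a prime. A function f : \mathbb{R}^+ \to \mathbb{R}^+ is p-adic ultrametric preserving (i.e., f \circ d_p is an ultrametric on \mathbb{Q}_p) if and only if f(0) = 0 and 0 < f(p^n) \le f(p^{n+1}) holds for every n \in \mathbb{Z}. -/
theorem stmt12 (p : ℕ) [Fact p.Prime] (f : ℝ → ℝ) :
    IsUltrametric (fun x y : ℚ_[p] => f (dist x y)) ↔
      (f 0 = 0 ∧ ∀ n : ℤ,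
        0 < f ((p : ℝ) ^ n) ∧ f ((p : ℝ) ^ n) ≤ f ((p : ℝ) ^ (n + 1))) := by
  have hp1 : (1:ℝ) < (p:ℝ) := by exact_mod_cast (Fact.out : p.Prime).one_lt
  have hp0 : ((p:ℚ_[p])) ≠ 0 := by
    exact_mod_cast (Nat.cast_ne_zero (R := ℚ_[p])).mpr (Fact.out : p.Prime).ne_zero
  have hnorm : ∀ n : ℤ, ‖((p:ℚ_[p])^(-n))‖ = (p:ℝ)^n := by
    intro n
    rw [norm_zpow, Padic.norm_p, ← zpow_neg_one, ← zpow_mul]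
    ring_nf
  constructor
  · rintro ⟨⟨hid, hsym, htri⟩, hstrong⟩
    have hf0 : f 0 = 0 := by
      have := (hid 0 0).mpr rfl
      simpa using this
    have hnonneg : ∀ x y : ℚ_[p], 0 ≤ f (dist x y) := by
      intro x y
      have h := htri x x y
      have h2 := hsym x y
      simp only [dist_self, hf0] at h
      simp only at h2
      linarith
    have hpos : ∀ n : ℤ, 0 < f ((p:ℝ)^n) := by
      intro n
      have hx : ((p:ℚ_[p])^(-n)) ≠ 0 := zpow_ne_zero _ hp0
      have hd : dist ((p:ℚ_[p])^(-n)) 0 = (p:ℝ)^n := by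
        rw [dist_zero_right, hnorm]
      have hne : f (dist ((p:ℚ_[p])^(-n)) 0) ≠ 0 := by
        intro h
        exact hx ((hid _ _).mp h)
      have := hnonneg ((p:ℚ_[p])^(-n)) 0
      rw [hd] at hne this
      exact lt_of_le_of_ne this (Ne.symm hne)
    refine ⟨hf0, fun n => ⟨hpos n, ?_⟩⟩
    set y : ℚ_[p] := (p:ℚ_[p])^(-n) with hy
    set z : ℚ_[p] := (p:ℚ_[p])^(-(n+1)) with hz
    have hny : ‖y‖ = (p:ℝ)^n := hnorm n
    have hnz : ‖z‖ = (p:ℝ)^(n+1) := hnorm (n+1)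
    have hlt : (p:ℝ)^n < (p:ℝ)^(n+1) := zpow_lt_zpow_right₀ hp1 (by omega)
    have hzy : ‖z - y‖ = (p:ℝ)^(n+1) := by
      have hne : ‖z‖ ≠ ‖-y‖ := by
        rw [norm_neg, hny, hnz]; exact hlt.ne'
      have := IsUltrametricDist.norm_add_eq_max_of_norm_ne_norm hne
      rw [← sub_eq_add_neg] at this
      rw [this, norm_neg, hny, hnz, max_eq_left hlt.le]
    have h := hstrong 0 y z
    have d1 : dist (0:ℚ_[p]) y = (p:ℝ)^n := by rw [dist_comm, dist_zero_right, hny]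
    have d2 : dist (0:ℚ_[p]) z = (p:ℝ)^(n+1) := by rw [dist_comm, dist_zero_right, hnz]
    have d3 : dist z y = (p:ℝ)^(n+1) := by rw [dist_eq_norm, hzy]
    simp only [d1, d2, d3, max_self] at h
    exact h
  · rintro ⟨hf0, hfn⟩
    have hfnn : ∀ a b : ℚ_[p], 0 ≤ f (dist a b) := by
      intro a b
      rcases eq_or_ne a b with h | h
      · simp [h, hf0]
      · have hab : a - b ≠ 0 := sub_ne_zero.mpr h
        rw [dist_eq_norm, Padic.norm_eq_zpow_neg_valuation hab]
        exact (hfn _).1.le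
    have hmono : ∀ m n : ℤ, m ≤ n → f ((p:ℝ)^m) ≤ f ((p:ℝ)^n) := by
      intro m
      refine fun n h => Int.le_induction (m := m)
        (motive := fun n _ => f ((p:ℝ)^m) ≤ f ((p:ℝ)^n)) le_rfl ?_ n h
      intro k _ ih
      exact ih.trans (hfn k).2
    have key : ∀ a b c d : ℚ_[p], dist a b ≤ dist c d →
        f (dist a b) ≤ f (dist c d) := by
      intro a b c d h
      rcases eq_or_ne a b with hab | hab
      · simp only [hab, dist_self, hf0]; exact hfnn c d
      · have hab' : a - b ≠ 0 := sub_ne_zero.mpr hab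
        have hcd : c ≠ d := by
          intro h'
          rw [h', dist_self] at h
          exact absurd (le_antisymm h dist_nonneg) (by
            simp [dist_eq_norm, norm_eq_zero, hab'])
        have hcd' : c - d ≠ 0 := sub_ne_zero.mpr hcd
        rw [dist_eq_norm, Padic.norm_eq_zpow_neg_valuation hab'] at h ⊢
        rw [dist_eq_norm, Padic.norm_eq_zpow_neg_valuation hcd'] at h ⊢
        have : -(a-b).valuation ≤ -(c-d).valuation :=
          (zpow_le_zpow_iff_right₀ hp1).mp h
        exact hmono _ _ this
    have hid : ∀ x y : ℚ_[p], f (dist x y) = 0 ↔ x = y := by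
      intro x y
      constructor
      · intro h
        by_contra hne
        have : x - y ≠ 0 := sub_ne_zero.mpr hne
        rw [dist_eq_norm, Padic.norm_eq_zpow_neg_valuation this] at h
        exact absurd h (hfn _).1.ne'
      · intro h; simp [h, hf0]
    have hult : ∀ x y z : ℚ_[p],
        f (dist x y) ≤ max (f (dist x z)) (f (dist z y)) := by
      intro x y z
      have h := dist_triangle_max x z y
      rcases le_max_iff.mp h with h' | h'
      · exact le_max_of_le_left (key _ _ _ _ h')
      · exact le_max_of_le_right (key _ _ _ _ h')
    refine ⟨⟨hid, fun x y => by simp [dist_comm], fun x y z => ?_⟩, hult⟩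
    exact (hult x y z).trans (max_le_add_of_nonneg (hfnn x z) (hfnn z y))
end

section
/- Let p be a prime and f : \mathbb{R}^+ \to \mathbb{R}^+. Then f \circ d_p is an ultrametric on \mathbb{Q}_p if and only if there exists an ultrametric preserving function g : \mathbb{R}^+ \to \mathbb{R}^+ whose restriction to the range \{0\} \cup \{p^n : n \in \mathbb{Z}\} of |\cdot|_p coincides with the restriction of f. -/
/-- Amenable + monotone implies ultrametric preserving. -/
lemma up_of_mono (g : ℝ → ℝ) (hg0 : g 0 = 0) (hpos : ∀ t > 0, 0 < g t)
    (hm : Monotone g) : UltrametricPreserving g := by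
  intro X d hd
  obtain ⟨⟨heq, hsymm, htri⟩, hstrong⟩ := hd
  have hnn : ∀ x y : X, 0 ≤ d x y := by
    intro x y
    have h0 : d x x = 0 := (heq x x).2 rfl
    have := htri x x y
    rw [h0, hsymm y x] at this
    linarith
  have hgnn : ∀ x y : X, 0 ≤ g (d x y) := fun x y => hg0 ▸ hm (hnn x y)
  refine ⟨⟨?_, ?_, ?_⟩, ?_⟩
  · intro x y
    constructor
    · intro h
      by_contra hne
      have hd0 : d x y ≠ 0 := fun h' => hne ((heq x y).1 h')
      have : 0 < d x y := lt_of_le_of_ne (hnn x y) (Ne.symm hd0)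
      exact absurd h (ne_of_gt (hpos _ this))
    · intro h; subst h; show g (d x x) = 0; rw [(heq x x).2 rfl, hg0]
  · intro x y; show g (d x y) = g (d y x); rw [hsymm x y]
  · intro x y z
    calc g (d x y) ≤ max (g (d x z)) (g (d z y)) := by
          rcases le_total (d x z) (d z y) with h | h
          · exact le_max_of_le_right (hm ((hstrong x y z).trans (max_le h le_rfl)))
          · exact le_max_of_le_left (hm ((hstrong x y z).trans (max_le le_rfl h)))
      _ ≤ g (d x z) + g (d z y) := max_le (by linarith [hgnn z y]) (by linarith [hgnn x z])
  · intro x y z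
    rcases le_total (d x z) (d z y) with h | h
    · exact le_max_of_le_right (hm ((hstrong x y z).trans (max_le h le_rfl)))
    · exact le_max_of_le_left (hm ((hstrong x y z).trans (max_le le_rfl h)))

theorem stmt13 (p : ℕ) [Fact p.Prime] (f : ℝ → ℝ) :
    IsUltrametric (fun x y : ℚ_[p] => f (dist x y)) ↔
      ∃ g : ℝ → ℝ, UltrametricPreserving g ∧
        ∀ t : ℝ, (t = 0 ∨ ∃ n : ℤ, t = (p : ℝ) ^ n) → g t = f t := by
  have hp1 : (1 : ℝ) < (p : ℝ) := by exact_mod_cast (Fact.out : p.Prime).one_lt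
  have hp0 : (0 : ℝ) < (p : ℝ) := by linarith
  constructor
  · rintro ⟨⟨heq, hsymm, htri⟩, hstrong⟩
    -- f 0 = 0
    have hf0 : f 0 = 0 := by
      have := (heq 0 0).2 rfl
      simpa using this
    -- f nonneg on distances
    have hfnn : ∀ x y : ℚ_[p], 0 ≤ f (dist x y) := by
      intro x y
      have h1 := htri x x y
      have h2 := hsymm y x
      simp only [dist_self, hf0] at h1
      simp only at h2
      rw [h2] at h1
      linarith
    -- dist from p powers
    have hdist : ∀ n : ℤ, dist ((p : ℚ_[p]) ^ (-n)) (0 : ℚ_[p]) = (p : ℝ) ^ n := by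
      intro n
      rw [dist_eq_norm, sub_zero, Padic.norm_p_zpow, neg_neg]
    have hfpos : ∀ n : ℤ, 0 < f ((p : ℝ) ^ n) := by
      intro n
      have hne : ((p : ℚ_[p]) ^ (-n)) ≠ 0 := by
        apply zpow_ne_zero
        exact_mod_cast (Fact.out : p.Prime).ne_zero
      have h1 : f (dist ((p : ℚ_[p]) ^ (-n)) 0) ≠ 0 := by
        intro h
        exact hne ((heq _ _).1 h)
      rw [hdist n] at h1
      have h2 := hfnn ((p : ℚ_[p]) ^ (-n)) 0
      rw [hdist n] at h2
      exact lt_of_le_of_ne h2 (Ne.symm h1)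
    -- monotone on p powers
    have hfmono : ∀ m n : ℤ, m ≤ n → f ((p : ℝ) ^ m) ≤ f ((p : ℝ) ^ n) := by
      intro m n hmn
      rcases eq_or_lt_of_le hmn with rfl | hlt
      · exact le_rfl
      have hnormne : ‖(p : ℚ_[p]) ^ (-m)‖ ≠ ‖-((p : ℚ_[p]) ^ (-n))‖ := by
        rw [norm_neg, Padic.norm_p_zpow, Padic.norm_p_zpow, neg_neg, neg_neg]
        intro h
        have := zpow_right_injective₀ hp0 (ne_of_gt hp1) h
        omega
      have hsub : ‖(p : ℚ_[p]) ^ (-m) - (p : ℚ_[p]) ^ (-n)‖ = (p : ℝ) ^ n := by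
        rw [sub_eq_add_neg, Padic.add_eq_max_of_ne hnormne, norm_neg,
          Padic.norm_p_zpow, Padic.norm_p_zpow, neg_neg, neg_neg]
        exact max_eq_right ((zpow_le_zpow_iff_right₀ hp1).2 hmn)
      have key := hstrong (0 : ℚ_[p]) ((p : ℚ_[p]) ^ (-m)) ((p : ℚ_[p]) ^ (-n))
      simp only at key
      rw [dist_comm (0 : ℚ_[p]) ((p : ℚ_[p]) ^ (-m)), hdist m,
        dist_comm (0 : ℚ_[p]) ((p : ℚ_[p]) ^ (-n)), hdist n] at key
      have : dist ((p : ℚ_[p]) ^ (-n)) ((p : ℚ_[p]) ^ (-m)) = (p : ℝ) ^ n := by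
        rw [dist_eq_norm, ← norm_neg, neg_sub, hsub]
      rw [this, max_self] at key
      exact key
    -- define g
    set g : ℝ → ℝ := fun t => if t ≤ 0 then 0 else f ((p : ℝ) ^ ⌈Real.logb p t⌉) with hg
    have hgzpow : ∀ n : ℤ, g ((p : ℝ) ^ n) = f ((p : ℝ) ^ n) := by
      intro n
      have hpow : (0 : ℝ) < (p : ℝ) ^ n := zpow_pos hp0 n
      have hlogb : Real.logb p ((p : ℝ) ^ n) = n := by
        rw [Real.logb, Real.log_zpow, mul_div_assoc, div_self (Real.log_ne_zero_of_pos_of_ne_one hp0 (ne_of_gt hp1)), mul_one]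
      rw [hg]
      simp only [not_le.2 hpow, if_false, hlogb, Int.ceil_intCast]
    have hg0 : g 0 = 0 := by rw [hg]; simp
    have hgpos : ∀ t > 0, 0 < g t := by
      intro t ht
      rw [hg]
      simp only [not_le.2 ht, if_false]
      exact hfpos _
    have hgmono : Monotone g := by
      intro s t hst
      rcases le_or_gt s 0 with hs | hs
      · rw [hg]
        simp only [hs, if_true]
        rcases le_or_gt t 0 with ht | ht
        · simp [ht]
        · simp only [not_le.2 ht, if_false]
          exact (hfpos _).le
      · have ht : 0 < t := lt_of_lt_of_le hs hst
        rw [hg]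
        simp only [not_le.2 hs, not_le.2 ht, if_false]
        exact hfmono _ _ (Int.ceil_le_ceil (Real.logb_le_logb_of_le hp1 hs hst))
    refine ⟨g, up_of_mono g hg0 hgpos hgmono, ?_⟩
    rintro t (rfl | ⟨n, rfl⟩)
    · rw [hg0, hf0]
    · exact hgzpow n
  · rintro ⟨g, hgu, hag⟩
    have hdu : IsUltrametric (fun x y : ℚ_[p] => dist x y) := by
      refine ⟨⟨fun x y => dist_eq_zero, fun x y => dist_comm x y, fun x y z => dist_triangle x z y⟩,
        fun x y z => IsUltrametricDist.dist_triangle_max x z y⟩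
    have hG := hgu ℚ_[p] (fun x y => dist x y) hdu
    have hfg : (fun x y : ℚ_[p] => f (dist x y)) = fun x y => g (dist x y) := by
      funext x y
      rcases eq_or_ne x y with rfl | hne
      · rw [dist_self, hag 0 (Or.inl rfl)]
      · have hsub : x - y ≠ 0 := sub_ne_zero_of_ne hne
        have : dist x y = (p : ℝ) ^ (-(x - y).valuation) := by
          rw [dist_eq_norm, Padic.norm_eq_zpow_neg_valuation hsub]
        rw [this, hag _ (Or.inr ⟨_, rfl⟩)]
    rw [hfg]
    exact hG
end

section
/- The function f defined by f(x) = 1/x for x > 0 and f(0) = 0 is amenable and satisfies f(2^{n-1}) \le 2 f(2^n) for all n \in \mathbb{Z}, but f \circ d_2 is not a metric on \mathbb{Q}_2; specifically for x=1, y=-3, z=0 the values f(|x-z|_2) = f(|z-y|_2) = 1 and f(|x-y|_2) = 4 violate the triangle inequality. -/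
theorem stmt14 :
    let f : ℝ → ℝ := fun x => if x = 0 then 0 else 1 / x
    Amenable f ∧
    (∀ n : ℤ, f ((2 : ℝ) ^ (n - 1)) ≤ 2 * f ((2 : ℝ) ^ n)) ∧
    ¬ IsMetric (fun x y : ℚ_[2] => f (dist x y)) ∧
    f (dist (1 : ℚ_[2]) 0) = 1 ∧
    f (dist (0 : ℚ_[2]) (-3)) = 1 ∧
    f (dist (1 : ℚ_[2]) (-3)) = 4 ∧
    f (dist (1 : ℚ_[2]) (-3)) > f (dist (1 : ℚ_[2]) 0) + f (dist (0 : ℚ_[2]) (-3)) := by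
  intro f
  have hf : ∀ x : ℝ, f x = if x = 0 then 0 else 1 / x := fun _ => rfl
  have d1 : dist (1 : ℚ_[2]) 0 = 1 := by simp
  have d2 : dist (0 : ℚ_[2]) (-3) = 1 := by
    have h3 : ((3:ℚ):ℚ_[2]) = 3 := by norm_num
    rw [dist_eq_norm, zero_sub, neg_neg, ← h3, Padic.eq_padicNorm]
    have : padicNorm 2 3 = 1 := by
      rw [padicNorm.eq_zpow_of_nonzero (by norm_num)]
      simp [padicValRat, padicValInt, padicValNat.eq_zero_of_not_dvd (by norm_num : ¬ 2 ∣ 3)]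
    rw [this]; norm_num
  have d3 : dist (1 : ℚ_[2]) (-3) = 1/4 := by
    have h4 : (1:ℚ_[2]) - (-3) = ((2:ℕ):ℚ_[2])^2 := by push_cast; norm_num
    rw [dist_eq_norm, h4, Padic.norm_p_pow]
    norm_num
  have f1 : f (dist (1 : ℚ_[2]) 0) = 1 := by rw [d1, hf]; norm_num
  have f2 : f (dist (0 : ℚ_[2]) (-3)) = 1 := by rw [d2, hf]; norm_num
  have f3 : f (dist (1 : ℚ_[2]) (-3)) = 4 := by rw [d3, hf]; norm_num
  refine ⟨⟨if_pos rfl, fun x hx => ?_⟩, fun n => ?_, fun h => ?_, f1, f2, f3, by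
    rw [f1, f2, f3]; norm_num⟩
  · rw [hf, if_neg hx.ne']; positivity
  · rw [hf, hf, if_neg (zpow_ne_zero _ two_ne_zero), if_neg (zpow_ne_zero _ two_ne_zero)]
    apply le_of_eq
    rw [zpow_sub₀ (two_ne_zero)]
    field_simp
  · have := h.2.2 1 (-3) 0
    simp only at this
    rw [f1, f2, f3] at this
    norm_num at this
end

section
/- Let X = \{x_1,x_2,x_3,x_4\} with the ultrametric d equal to 1 on \{x_1,x_3\}, 2 on \{x_2,x_4\}, 3 on all other distinct pairs, and 0 on the diagonal. Define f : \mathbb{R}^+ \to \mathbb{R}^+ by f(t) = 2t for 0 \le t \le 1, f(t) = 3 - t for 1 \le t \le 2, f(t) = -1 + (4/3)t for 2 \le t \le 3, and f(t) = 3 for t \ge 3. Then f \circ d is an ultrametric on X, but f(2) < f(1), so f does not agree on \{1,2,3\} with any increasing amenable function g : \mathbb{R}^+ \to \mathbb{R}^+. -/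
def exampleDist : Fin 4 → Fin 4 → ℝ := fun x y =>
  if x = y then 0
  else if (x = 0 ∧ y = 2) ∨ (x = 2 ∧ y = 0) then 1
  else if (x = 1 ∧ y = 3) ∨ (x = 3 ∧ y = 1) then 2
  else 3

noncomputable def exampleF : ℝ → ℝ := fun t =>
  if t ≤ 1 then 2 * t
  else if t ≤ 2 then 3 - t
  else if t ≤ 3 then -1 + (4 / 3) * t
  else 3


lemma exF1 : exampleF 1 = 2 := by norm_num [exampleF]
lemma exF2 : exampleF 2 = 1 := by norm_num [exampleF]
lemma exF3 : exampleF 3 = 3 := by norm_num [exampleF]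

def dd : Fin 4 → Fin 4 → ℝ := fun x y =>
  if x = y then (0:ℝ)
  else if (x = 0 ∧ y = 2) ∨ (x = 2 ∧ y = 0) then 2
  else if (x = 1 ∧ y = 3) ∨ (x = 3 ∧ y = 1) then 1
  else 3

lemma v3 : ((3 : Fin 4) : ℕ) = 3 := rfl

lemma fd_eq : ∀ x y : Fin 4, exampleF (exampleDist x y) = dd x y := by
  intro x y
  fin_cases x <;> fin_cases y <;>
    norm_num [exampleDist, exampleF, dd, Fin.ext_iff, v3]

set_option maxHeartbeats 1000000 in
theorem stmt16 :
    IsUltrametric (fun x y => exampleF (exampleDist x y)) ∧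
    exampleF 2 < exampleF 1 ∧
    ∀ g : ℝ → ℝ, Amenable g → (∀ a b : ℝ, 0 ≤ a → a ≤ b → g a ≤ g b) →
      ¬ (g 1 = exampleF 1 ∧ g 2 = exampleF 2 ∧ g 3 = exampleF 3) := by
  refine ⟨⟨⟨?_, ?_, ?_⟩, ?_⟩, ?_, ?_⟩
  · intro x y; simp only [fd_eq]
    fin_cases x <;> fin_cases y <;> norm_num [dd, Fin.ext_iff, v3]
  · intro x y; simp only [fd_eq]
    fin_cases x <;> fin_cases y <;> norm_num [dd, Fin.ext_iff, v3]
  · intro x y z; simp only [fd_eq]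
    fin_cases x <;> fin_cases y <;> fin_cases z <;> norm_num [dd, Fin.ext_iff, v3]
  · intro x y z; simp only [fd_eq]
    fin_cases x <;> fin_cases y <;> fin_cases z <;> norm_num [dd, Fin.ext_iff, v3]
  · rw [exF1, exF2]; norm_num
  · rintro g _ hmono ⟨h1, h2, _⟩
    have := hmono 1 2 (by norm_num) (by norm_num)
    rw [h1, h2, exF1, exF2] at this
    norm_num at this
end

section
/- Let U be a non-empty class of non-empty ultrametric spaces, Ran_U the union of the ranges of their metrics, and G_U the relation on Ran_U with \langle s,t \rangle \in G_U iff there exist (X,d) \in U and x_1,x_2,x_3 \in X with s = d(x_1,x_3) and t = d(x_1,x_2) = d(x_2,x_3). Then the relation \preccurlyeq_U, defined as the union of the transitive closure of G_U with the diagonal on Ran_U, is a partial order on Ran_U; moreover 0 \in Ran_U and 0 is the least element of (Ran_U, \preccurlyeq_U). -/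
theorem stmt17 (ι : Type*) [Nonempty ι] (X : ι → Type*) (hX : ∀ i, Nonempty (X i))
    (d : ∀ i, X i → X i → ℝ) (hd : ∀ i, IsUltrametric (d i)) :
    let RanU : Set ℝ := {t | ∃ i x y, d i x y = t}
    let G : ℝ → ℝ → Prop := fun s t =>
      ∃ (i : ι) (x₁ x₂ x₃ : X i), s = d i x₁ x₃ ∧ t = d i x₁ x₂ ∧ t = d i x₂ x₃
    let R : ℝ → ℝ → Prop := fun s t => Relation.TransGen G s t ∨ s = t
    (∀ s, R s s) ∧
    (∀ s t u, R s t → R t u → R s u) ∧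
    (∀ s t, s ∈ RanU → t ∈ RanU → R s t → R t s → s = t) ∧
    (0 : ℝ) ∈ RanU ∧
    (∀ t ∈ RanU, R 0 t) := by
  intro RanU G R
  have hGle : ∀ s t, G s t → s ≤ t := by
    rintro s t ⟨i, x₁, x₂, x₃, hs, ht1, ht2⟩
    have := (hd i).2 x₁ x₃ x₂
    rw [← hs, ← ht1, ← ht2, max_self] at this
    exact this
  have hRle : ∀ s t, R s t → s ≤ t := by
    rintro s t (h | rfl)
    · exact h.trans_induction_on (fun h => hGle _ _ h) (fun _ _ a b => a.trans b)
    · exact le_rfl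
  refine ⟨fun s => Or.inr rfl, ?_, ?_, ?_, ?_⟩
  · rintro s t u (h1 | rfl) (h2 | rfl)
    · exact Or.inl (h1.trans h2)
    · exact Or.inl h1
    · exact Or.inl h2
    · exact Or.inr rfl
  · intro s t _ _ h1 h2
    exact le_antisymm (hRle _ _ h1) (hRle _ _ h2)
  · obtain ⟨i⟩ := ‹Nonempty ι›
    obtain ⟨x⟩ := hX i
    exact ⟨i, x, x, ((hd i).1.1 x x).mpr rfl⟩
  · rintro t ⟨i, x, y, rfl⟩
    refine Or.inl (Relation.TransGen.single ⟨i, x, y, x, ?_, rfl, ((hd i).1.2.1 y x).symm⟩)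
    exact (((hd i).1.1 x x).mpr rfl).symm
end

section
/- Let U be a non-empty class of non-empty ultrametric spaces, with Ran_U and the partial order \preccurlyeq_U defined via the relation G_U. For f : \mathbb{R}^+ \to \mathbb{R}^+, the following are equivalent: (1) the restriction of f to Ran_U is isotone from (Ran_U, \preccurlyeq_U) to (\mathbb{R}^+, \le) and satisfies f^{-1}(0) \cap Ran_U = \{0\}; (2) f \circ d is an ultrametric on X for every (X,d) \in U. -/
theorem stmt18 (ι : Type*) [Nonempty ι] (X : ι → Type*) (hX : ∀ i, Nonempty (X i))
    (d : ∀ i, X i → X i → ℝ) (hd : ∀ i, IsUltrametric (d i)) (f : ℝ → ℝ) :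
    let RanU : Set ℝ := {t | ∃ i x y, d i x y = t}
    let G : ℝ → ℝ → Prop := fun s t =>
      ∃ (i : ι) (x₁ x₂ x₃ : X i), s = d i x₁ x₃ ∧ t = d i x₁ x₂ ∧ t = d i x₂ x₃
    let R : ℝ → ℝ → Prop := fun s t => Relation.TransGen G s t ∨ s = t
    ((∀ s t, s ∈ RanU → t ∈ RanU → R s t → f s ≤ f t) ∧
      {t | t ∈ RanU ∧ f t = 0} = {0}) ↔
    (∀ i, IsUltrametric (fun x y => f (d i x y))) := by

  intro RanU G R
  have hsymm : ∀ i (x y : X i), d i x y = d i y x := fun i => (hd i).1.2.1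
  have heq0 : ∀ i (x : X i), d i x x = 0 := fun i x => ((hd i).1.1 x x).2 rfl
  constructor
  · rintro ⟨hiso, hzero⟩ i
    have h0Ran : (0:ℝ) ∈ RanU := by
      obtain ⟨x⟩ := hX i
      exact ⟨i, x, x, heq0 i x⟩
    have hf0 : f 0 = 0 := by
      have h : (0:ℝ) ∈ {t | t ∈ RanU ∧ f t = 0} := by rw [hzero]; rfl
      exact h.2
    have hfz : ∀ t ∈ RanU, f t = 0 → t = 0 := by
      intro t ht hft
      have h : t ∈ ({0} : Set ℝ) := by rw [← hzero]; exact ⟨ht, hft⟩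
      exact h
    have hG0 : ∀ t ∈ RanU, G 0 t := by
      rintro t ⟨j, x, y, rfl⟩
      exact ⟨j, x, y, x, (heq0 j x).symm, rfl, hsymm j x y⟩
    have hfnn : ∀ t ∈ RanU, 0 ≤ f t := by
      intro t ht
      have h := hiso 0 t h0Ran ht (Or.inl (Relation.TransGen.single (hG0 t ht)))
      linarith
    have key : ∀ (x y z : X i), f (d i x y) ≤ max (f (d i x z)) (f (d i z y)) := by
      intro x y z
      rcases lt_trichotomy (d i x z) (d i z y) with h | h | h
      · have hac : d i x y = d i z y := by
          have h1 := (hd i).2 x y z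
          have h2 := (hd i).2 z y x
          rw [hsymm i z x] at h2
          rcases le_or_gt (d i z y) (d i x y) with h3 | h3
          · exact le_antisymm (le_trans h1 (by simp [le_of_lt h])) h3
          · exfalso
            rcases max_cases (d i x z) (d i x y) with ⟨he, _⟩ | ⟨he, _⟩ <;> rw [he] at h2 <;> linarith
        rw [hac]; exact le_max_right _ _
      · have hG : G (d i x y) (d i z y) :=
          ⟨i, x, z, y, rfl, h.symm, rfl⟩
        have := hiso _ _ ⟨i, x, y, rfl⟩ ⟨i, z, y, rfl⟩ (Or.inl (Relation.TransGen.single hG))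
        exact le_max_of_le_right this
      · have hab : d i x y = d i x z := by
          have h1 := (hd i).2 x y z
          have h2 := (hd i).2 x z y
          rw [hsymm i y z] at h2
          rcases le_or_gt (d i x z) (d i x y) with h3 | h3
          · exact le_antisymm (le_trans h1 (by simp [le_of_lt h])) h3
          · exfalso
            rcases max_cases (d i x y) (d i z y) with ⟨he, _⟩ | ⟨he, _⟩ <;> rw [he] at h2 <;> linarith
        rw [hab]; exact le_max_left _ _
    refine ⟨⟨?_, ?_, ?_⟩, ?_⟩
    · intro x y
      constructor
      · intro hxy
        have h := hfz (d i x y) ⟨i, x, y, rfl⟩ hxy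
        exact ((hd i).1.1 x y).1 h
      · intro hxy
        subst hxy
        show f (d i x x) = 0
        rw [heq0 i x]; exact hf0
    · intro x y; show f (d i x y) = f (d i y x); rw [hsymm i x y]
    · intro x y z
      have h1 := key x y z
      have h2 := hfnn (d i x z) ⟨i, x, z, rfl⟩
      have h3 := hfnn (d i z y) ⟨i, z, y, rfl⟩
      rcases max_cases (f (d i x z)) (f (d i z y)) with ⟨he, _⟩ | ⟨he, _⟩ <;> rw [he] at h1 <;> linarith
    · exact key
  · intro hf
    have step : ∀ s t, G s t → f s ≤ f t := by
      rintro s t ⟨j, x₁, x₂, x₃, rfl, ht1, ht2⟩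
      have h := (hf j).2 x₁ x₃ x₂
      simp only at h
      rw [← ht1, ← ht2, max_self] at h
      exact h
    have trans : ∀ s t, Relation.TransGen G s t → f s ≤ f t := by
      intro s t hR
      induction hR with
      | single h => exact step _ _ h
      | tail _ h ih => exact le_trans ih (step _ _ h)
    constructor
    · intro s t _ _ hR
      rcases hR with hR | rfl
      · exact trans _ _ hR
      · exact le_refl _
    · ext t
      constructor
      · rintro ⟨⟨j, x, y, rfl⟩, hft⟩
        have h := ((hf j).1.1 x y).1 hft
        subst h
        exact heq0 j x
      · rintro rfl
        have i := Classical.arbitrary ι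
        obtain ⟨x⟩ := hX i
        have h := ((hf i).1.1 x x).2 rfl
        simp only at h
        rw [heq0 i x] at h
        exact ⟨⟨i, x, x, heq0 i x⟩, h⟩
end
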